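/- arXiv:1206.5299 — 3 statements merged into one kernel-verified Lean document; each statement's English description precedes it below -/
import Mathlib

section
/- Let q be a real number with 0 < q < 1, let α > 0 be real, let h be a positive integer, let x > 0 be real, let a and b be odd positive integers, and let j be an integer with 0 ≤ j ≤ a-1. Then for every complex s, ζ̃_{q^a}^{(α,h)}(s, bx + bj/a) = [a]_{q^α}^{s} · [2]_{q^a} · ∑_{i=0}^{b-1} (-1)^i q^{iah} ∑_{m=0}^∞ (-1)^m q^{mabh} / [ab(m+x) + ai + bj]_{q^α}^{s}, where [a]_{q^α}^{s} = exp(s · log [a]_{q^α}). -/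
/-- The `q`-number `[x]_q = (1 - q^x)/(1 - q)` (real exponent, via `rpow`). -/
noncomputable def qnum (q x : ℝ) : ℝ := (1 - q ^ x) / (1 - q)

/-- The `m`-th term of the weighted `(h,q)`-zeta series:
`(-1)^m q^{mh} [m+x]_{q^α}^{-s}` where `t^{-s} = exp(-s · log t)` with the real log. -/
noncomputable def zetaTerm (q α : ℝ) (h : ℕ) (x : ℝ) (s : ℂ) (m : ℕ) : ℂ :=
  (-1 : ℂ) ^ m * (q : ℂ) ^ (m * h) *
    Complex.exp (-s * (Real.log (qnum (q ^ α) ((m : ℝ) + x)) : ℂ))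

/-- The weighted `(h,q)`-zeta function
`ζ̃_q^{(α,h)}(s,x) = [2]_q ∑_{m≥0} (-1)^m q^{mh} [m+x]_{q^α}^{-s}`. -/
noncomputable def hqZeta (q α : ℝ) (h : ℕ) (x : ℝ) (s : ℂ) : ℂ :=
  (qnum q 2 : ℂ) * ∑' m : ℕ, zetaTerm q α h x s m

lemma qnum_pos {p y : ℝ} (hp0 : 0 < p) (hp1 : p < 1) (hy : 0 < y) : 0 < qnum p y := by
  have h1 : p ^ y < 1 := Real.rpow_lt_one hp0.le hp1 hy
  exact div_pos (by linarith) (by linarith)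

lemma qnum_le_inv {p : ℝ} (hp0 : 0 < p) (hp1 : p < 1) (y : ℝ) :
    qnum p y ≤ 1 / (1 - p) := by
  have h1 : (0 : ℝ) ≤ p ^ y := Real.rpow_nonneg hp0.le y
  unfold qnum
  have h2 : (0:ℝ) < 1 - p := by linarith
  exact (div_le_div_iff_of_pos_right h2).mpr (by linarith)

lemma qnum_mono {p : ℝ} (hp0 : 0 < p) (hp1 : p < 1) {y z : ℝ} (hyz : y ≤ z) :
    qnum p y ≤ qnum p z := by
  have h1 : p ^ z ≤ p ^ y := Real.rpow_le_rpow_of_exponent_ge hp0 hp1.le hyz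
  unfold qnum
  have h2 : (0:ℝ) < 1 - p := by linarith
  exact (div_le_div_iff_of_pos_right h2).mpr (by linarith)

/-- The key base-change identity `[y]_{q^{aα}} = [ay]_{q^α} / [a]_{q^α}`. -/
lemma qnum_pow_base {q α : ℝ} (hq0 : 0 < q) (hq1 : q < 1) (hα : 0 < α)
    {a : ℕ} (ha : 0 < a) (y : ℝ) :
    qnum ((q ^ a) ^ α) y = qnum (q ^ α) ((a : ℝ) * y) / qnum (q ^ α) (a : ℝ) := by
  have hq : (0 : ℝ) ≤ q := hq0.le
  have hqα1 : q ^ α < 1 := Real.rpow_lt_one hq hq1 hα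
  have haα1 : q ^ (α * (a : ℝ)) < 1 := by
    apply Real.rpow_lt_one hq hq1
    have : (0 : ℝ) < (a : ℝ) := by exact_mod_cast ha
    positivity
  have hne : (1 : ℝ) - q ^ α ≠ 0 := by linarith
  have hne2 : (1 : ℝ) - q ^ (α * (a : ℝ)) ≠ 0 := by linarith
  unfold qnum
  rw [← Real.rpow_natCast q a]
  rw [← Real.rpow_mul hq, ← Real.rpow_mul hq, ← Real.rpow_mul hq, ← Real.rpow_mul hq]
  rw [show (a : ℝ) * α * y = α * ((a : ℝ) * y) by ring,
    show (a : ℝ) * α = α * (a : ℝ) by ring]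
  field_simp

/-- Splitting a `tsum` over `ℕ` into residue classes mod `b`. -/
lemma tsum_nat_residues (b : ℕ) (hb : 0 < b) (f : ℕ → ℂ) (hf : Summable f) :
    ∑' n, f n = ∑ i ∈ Finset.range b, ∑' m, f (m * b + i) := by
  haveI : NeZero b := ⟨hb.ne'⟩
  set e : ℕ × Fin b ≃ ℕ := (Nat.divModEquiv b).symm with he
  have hg : Summable fun p : ℕ × Fin b => f (p.1 * b + (p.2 : ℕ)) :=
    (e.summable_iff (f := f)).mpr hf
  have h1 : ∑' p : ℕ × Fin b, f (p.1 * b + (p.2 : ℕ)) = ∑' n, f n := e.tsum_eq f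
  set e2 : Fin b × ℕ ≃ ℕ × Fin b := Equiv.prodComm _ _ with he2
  have h2 : ∑' p : Fin b × ℕ, f (p.2 * b + (p.1 : ℕ)) =
      ∑' p : ℕ × Fin b, f (p.1 * b + (p.2 : ℕ)) :=
    e2.tsum_eq fun p : ℕ × Fin b => f (p.1 * b + (p.2 : ℕ))
  have hfiber : ∀ i : Fin b, Summable fun m : ℕ => f (m * b + (i : ℕ)) := by
    intro i
    apply hf.comp_injective
    intro m₁ m₂ hmm
    simp only at hmm
    have h3 : m₁ * b = m₂ * b := by omega
    exact Nat.eq_of_mul_eq_mul_right hb h3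
  have h4 : ∑' p : Fin b × ℕ, f (p.2 * b + (p.1 : ℕ)) =
      ∑' (i : Fin b) (m : ℕ), f (m * b + (i : ℕ)) :=
    Summable.tsum_prod' ((e2.summable_iff (f := fun p : ℕ × Fin b => f (p.1 * b + (p.2 : ℕ)))).mpr hg)
      hfiber
  rw [← h1, ← h2, h4, tsum_fintype]
  exact Fin.sum_univ_eq_sum_range (fun i => ∑' m : ℕ, f (m * b + i)) b

theorem stmt1 (q α x : ℝ) (hq0 : 0 < q) (hq1 : q < 1) (hα : 0 < α) (h : ℕ) (hh : 0 < h)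
    (hx : 0 < x) (a b : ℕ) (ha : 0 < a) (hb : 0 < b) (hao : Odd a) (hbo : Odd b)
    (j : ℕ) (hj : j < a) (s : ℂ) :
    hqZeta (q ^ a) α h ((b : ℝ) * x + (b : ℝ) * (j : ℝ) / (a : ℝ)) s =
      Complex.exp (s * (Real.log (qnum (q ^ α) (a : ℝ)) : ℂ)) * (qnum (q ^ a) 2 : ℂ) *
        ∑ i ∈ Finset.range b, (-1 : ℂ) ^ i * (q : ℂ) ^ (i * a * h) *
          ∑' m : ℕ, (-1 : ℂ) ^ m * (q : ℂ) ^ (m * a * b * h) *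
            Complex.exp (-s *
              (Real.log (qnum (q ^ α)
                ((a : ℝ) * (b : ℝ) * ((m : ℝ) + x) + (a : ℝ) * (i : ℝ) + (b : ℝ) * (j : ℝ))) : ℂ)) := by
  have ha' : (0 : ℝ) < (a : ℝ) := by exact_mod_cast ha
  have hb' : (0 : ℝ) < (b : ℝ) := by exact_mod_cast hb
  have hj' : (0 : ℝ) ≤ (j : ℝ) := Nat.cast_nonneg j
  have hqα0 : 0 < q ^ α := Real.rpow_pos_of_pos hq0 α
  have hqα1 : q ^ α < 1 := Real.rpow_lt_one hq0.le hq1 hα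
  set X : ℝ := (b : ℝ) * x + (b : ℝ) * (j : ℝ) / (a : ℝ) with hX
  set E : ℂ := Complex.exp (s * (Real.log (qnum (q ^ α) (a : ℝ)) : ℂ)) with hE
  set f : ℕ → ℂ := fun n => (-1 : ℂ) ^ n * (q : ℂ) ^ (n * (a * h)) *
    Complex.exp (-s * (Real.log (qnum (q ^ α)
      ((a : ℝ) * (n : ℝ) + (a : ℝ) * (b : ℝ) * x + (b : ℝ) * (j : ℝ))) : ℂ)) with hf
  -- positivity of arguments
  have hargpos : ∀ n : ℕ, 0 < (a : ℝ) * (n : ℝ) + (a : ℝ) * (b : ℝ) * x + (b : ℝ) * (j : ℝ) := by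
    intro n
    have hn : (0 : ℝ) ≤ (n : ℝ) := Nat.cast_nonneg n
    nlinarith [mul_nonneg ha'.le hn, mul_pos (mul_pos ha' hb') hx, mul_nonneg hb'.le hj']
  have hqa_pos : 0 < qnum (q ^ α) (a : ℝ) := qnum_pos hqα0 hqα1 ha'
  -- Step A: each term of the LHS series rewrites via `f`
  have stepA : ∀ m : ℕ, zetaTerm (q ^ a) α h X s m = E * f m := by
    intro m
    have hm : (0 : ℝ) ≤ (m : ℝ) := Nat.cast_nonneg m
    have harg : (a : ℝ) * ((m : ℝ) + X) =
        (a : ℝ) * (m : ℝ) + (a : ℝ) * (b : ℝ) * x + (b : ℝ) * (j : ℝ) := by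
      rw [hX]; field_simp; ring
    have hq1' : qnum ((q ^ a) ^ α) ((m : ℝ) + X) =
        qnum (q ^ α) ((a : ℝ) * (m : ℝ) + (a : ℝ) * (b : ℝ) * x + (b : ℝ) * (j : ℝ)) /
          qnum (q ^ α) (a : ℝ) := by
      rw [qnum_pow_base hq0 hq1 hα ha, harg]
    have hA_pos : 0 < qnum (q ^ α)
        ((a : ℝ) * (m : ℝ) + (a : ℝ) * (b : ℝ) * x + (b : ℝ) * (j : ℝ)) :=
      qnum_pos hqα0 hqα1 (hargpos m)
    unfold zetaTerm
    have hcast : ((q ^ a : ℝ) : ℂ) ^ (m * h) = (q : ℂ) ^ (m * (a * h)) := by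
      push_cast
      rw [← pow_mul, show a * (m * h) = m * (a * h) by ring]
    rw [hq1', Real.log_div hA_pos.ne' hqa_pos.ne', hcast]
    have hexp : Complex.exp (-s * ((Real.log (qnum (q ^ α)
          ((a : ℝ) * (m : ℝ) + (a : ℝ) * (b : ℝ) * x + (b : ℝ) * (j : ℝ))) -
          Real.log (qnum (q ^ α) (a : ℝ)) : ℝ) : ℂ)) =
        E * Complex.exp (-s * (Real.log (qnum (q ^ α)
          ((a : ℝ) * (m : ℝ) + (a : ℝ) * (b : ℝ) * x + (b : ℝ) * (j : ℝ))) : ℂ)) := by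
      rw [hE, ← Complex.exp_add]
      congr 1
      push_cast
      ring
    rw [hexp, hf]
    ring
  -- Step C: summability of f
  have hsum : Summable f := by
    set c : ℝ := (a : ℝ) * (b : ℝ) * x + (b : ℝ) * (j : ℝ) with hc
    have hcpos : (0 : ℝ) < c := by
      rw [hc]
      nlinarith [mul_pos (mul_pos ha' hb') hx, mul_nonneg hb'.le hj']
    set M : ℝ := max |Real.log (qnum (q ^ α) c)| |Real.log (1 / (1 - q ^ α))| with hM
    set C : ℝ := Real.exp (|s.re| * M) with hC
    have hr0 : (0 : ℝ) ≤ q ^ (a * h) := by positivity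
    have hr1 : q ^ (a * h) < 1 := by
      apply pow_lt_one₀ hq0.le hq1
      exact Nat.mul_ne_zero ha.ne' hh.ne'
    apply Summable.of_norm_bounded (g := fun n : ℕ => C * (q ^ (a * h)) ^ n)
      ((summable_geometric_of_lt_one hr0 hr1).mul_left C)
    intro n
    have hn : (0 : ℝ) ≤ (n : ℝ) := Nat.cast_nonneg n
    set L : ℝ := Real.log (qnum (q ^ α)
      ((a : ℝ) * (n : ℝ) + (a : ℝ) * (b : ℝ) * x + (b : ℝ) * (j : ℝ))) with hL
    have htlow : qnum (q ^ α) c ≤ qnum (q ^ α)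
        ((a : ℝ) * (n : ℝ) + (a : ℝ) * (b : ℝ) * x + (b : ℝ) * (j : ℝ)) := by
      apply qnum_mono hqα0 hqα1
      rw [hc]
      nlinarith [mul_nonneg ha'.le hn]
    have hthigh : qnum (q ^ α)
        ((a : ℝ) * (n : ℝ) + (a : ℝ) * (b : ℝ) * x + (b : ℝ) * (j : ℝ)) ≤
        1 / (1 - q ^ α) := qnum_le_inv hqα0 hqα1 _
    have hc0 : 0 < qnum (q ^ α) c := qnum_pos hqα0 hqα1 hcpos
    have hLlow : Real.log (qnum (q ^ α) c) ≤ L :=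
      Real.log_le_log hc0 htlow
    have hLhigh : L ≤ Real.log (1 / (1 - q ^ α)) :=
      Real.log_le_log (qnum_pos hqα0 hqα1 (hargpos n)) hthigh
    have habsL : |L| ≤ M := by
      rw [abs_le]
      constructor
      · calc -M ≤ -|Real.log (qnum (q ^ α) c)| := by
              apply neg_le_neg; exact le_max_left _ _
          _ ≤ Real.log (qnum (q ^ α) c) := neg_abs_le _
          _ ≤ L := hLlow
      · calc L ≤ Real.log (1 / (1 - q ^ α)) := hLhigh
          _ ≤ |Real.log (1 / (1 - q ^ α))| := le_abs_self _
          _ ≤ M := le_max_right _ _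
    have hre : (-s * (L : ℂ)).re = -s.re * L := by
      simp [Complex.mul_re]
    have hexp_bound : Real.exp ((-s * (L : ℂ)).re) ≤ C := by
      rw [hre, hC]
      apply Real.exp_le_exp.mpr
      calc -s.re * L ≤ |(-s.re) * L| := le_abs_self _
        _ = |s.re| * |L| := by rw [abs_mul, abs_neg]
        _ ≤ |s.re| * M := by
            apply mul_le_mul_of_nonneg_left habsL (abs_nonneg _)
    have hfn : f n = (-1 : ℂ) ^ n * (q : ℂ) ^ (n * (a * h)) *
        Complex.exp (-s * (L : ℂ)) := by
      simp only [hf, hL]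
    have hnorm : ‖f n‖ = q ^ (n * (a * h)) * Real.exp ((-s * (L : ℂ)).re) := by
      rw [hfn]
      simp only [norm_mul, norm_pow, norm_neg, norm_one, one_pow, one_mul,
        Complex.norm_exp, Complex.norm_real, Real.norm_eq_abs, abs_of_pos hq0]
    rw [hnorm]
    have hpow : q ^ (n * (a * h)) = (q ^ (a * h)) ^ n := by
      rw [← pow_mul, Nat.mul_comm]
    rw [hpow]
    calc (q ^ (a * h)) ^ n * Real.exp ((-s * (L : ℂ)).re)
        ≤ (q ^ (a * h)) ^ n * C := by
          apply mul_le_mul_of_nonneg_left hexp_bound (by positivity)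
      _ = C * (q ^ (a * h)) ^ n := by ring
  -- Step E: the inner tsums
  have stepE : ∀ i ∈ Finset.range b,
      (∑' m : ℕ, f (m * b + i)) =
      (-1 : ℂ) ^ i * (q : ℂ) ^ (i * a * h) *
        ∑' m : ℕ, (-1 : ℂ) ^ m * (q : ℂ) ^ (m * a * b * h) *
          Complex.exp (-s * (Real.log (qnum (q ^ α)
            ((a : ℝ) * (b : ℝ) * ((m : ℝ) + x) + (a : ℝ) * (i : ℝ) + (b : ℝ) * (j : ℝ))) : ℂ)) := by
    intro i _
    have hterm : ∀ m : ℕ, f (m * b + i) =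
        ((-1 : ℂ) ^ i * (q : ℂ) ^ (i * a * h)) *
          ((-1 : ℂ) ^ m * (q : ℂ) ^ (m * a * b * h) *
            Complex.exp (-s * (Real.log (qnum (q ^ α)
              ((a : ℝ) * (b : ℝ) * ((m : ℝ) + x) + (a : ℝ) * (i : ℝ) + (b : ℝ) * (j : ℝ))) : ℂ))) := by
      intro m
      simp only [hf]
      have hsign : (-1 : ℂ) ^ (m * b + i) = (-1 : ℂ) ^ m * (-1 : ℂ) ^ i := by
        rw [pow_add, mul_comm m b, pow_mul, Odd.neg_one_pow hbo]
      have hpow : (q : ℂ) ^ ((m * b + i) * (a * h)) =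
          (q : ℂ) ^ (m * a * b * h) * (q : ℂ) ^ (i * a * h) := by
        rw [← pow_add]
        congr 1
        ring
      have harg : (a : ℝ) * ((m * b + i : ℕ) : ℝ) + (a : ℝ) * (b : ℝ) * x + (b : ℝ) * (j : ℝ) =
          (a : ℝ) * (b : ℝ) * ((m : ℝ) + x) + (a : ℝ) * (i : ℝ) + (b : ℝ) * (j : ℝ) := by
        push_cast
        ring
      rw [hsign, hpow, harg]
      ring
    rw [tsum_congr hterm, tsum_mul_left]
  -- Assemble
  unfold hqZeta
  rw [tsum_congr stepA, tsum_mul_left,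
    tsum_nat_residues b hb f hsum, Finset.sum_congr rfl stepE]
  ring
end

section
/- Let q be a real number with 0 < q < 1, let α > 0 be real, let h be a positive integer, let x > 0 be real, and let a and b be odd positive integers. Then for every complex s, ∑_{j=0}^{a-1} (-1)^j q^{jbh} ζ̃_{q^a}^{(α,h)}(s, bx + bj/a) = [a]_{q^α}^{s} · [2]_{q^a} · ∑_{j=0}^{a-1} (-1)^j q^{jbh} ∑_{i=0}^{b-1} (-1)^i q^{iah} ∑_{m=0}^∞ (-1)^m q^{mabh} / [ab(m+x) + ai + bj]_{q^α}^{s}, where [a]_{q^α}^{s} = exp(s · log [a]_{q^α}). -/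
lemma qnum_pos_s2 {Q : ℝ} (hQ0 : 0 < Q) (hQ1 : Q < 1) {y : ℝ} (hy : 0 < y) :
    0 < qnum Q y := by
  have h1 : Q ^ y < 1 := Real.rpow_lt_one hQ0.le hQ1 hy
  exact div_pos (by linarith) (by linarith)

lemma qnum_le {Q : ℝ} (hQ0 : 0 < Q) (hQ1 : Q < 1) {y z : ℝ} (hyz : y ≤ z) :
    qnum Q y ≤ qnum Q z := by
  have := Real.rpow_le_rpow_of_exponent_ge hQ0 hQ1.le hyz
  unfold qnum
  gcongr

lemma qnum_upper {Q : ℝ} (hQ0 : 0 < Q) (hQ1 : Q < 1) (y : ℝ) :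
    qnum Q y ≤ 1 / (1 - Q) := by
  have : 0 < Q ^ y := Real.rpow_pos_of_pos hQ0 y
  unfold qnum
  gcongr
  · linarith

-- q-number of power base
lemma qnum_pow {Q : ℝ} (hQ0 : 0 < Q) (hQ1 : Q < 1) (a : ℕ) (ha : 0 < a) (y : ℝ) :
    qnum (Q ^ a) y = qnum Q ((a : ℝ) * y) / qnum Q (a : ℝ) := by
  have h1Q : (1 : ℝ) - Q ≠ 0 := by linarith
  have hpow : ((Q ^ a : ℝ)) ^ y = Q ^ ((a : ℝ) * y) := by
    rw [← Real.rpow_natCast Q a, ← Real.rpow_mul hQ0.le]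
  have hQa : (Q : ℝ) ^ (a : ℝ) = Q ^ a := Real.rpow_natCast Q a
  unfold qnum
  rw [hpow, hQa]
  field_simp

lemma summable_zterm (q : ℝ) (hq0 : 0 < q) (hq1 : q < 1) {Q : ℝ} (hQ0 : 0 < Q) (hQ1 : Q < 1)
    {c : ℕ} (hc : 0 < c) {A B : ℝ} (hA : 0 < A) (hB : 0 < B) (s : ℂ) :
    Summable fun n : ℕ =>
      (-1 : ℂ) ^ n * (q : ℂ) ^ (n * c) *
        Complex.exp (-s * (Real.log (qnum Q (A * n + B)) : ℂ)) := by
  set M : ℝ := |Real.log (qnum Q B)| + |Real.log (1 - Q)| with hM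
  set C : ℝ := Real.exp (‖s‖ * M) with hC
  have hq1' : (0:ℝ) < 1 - Q := by linarith
  refine Summable.of_norm_bounded (g := fun n => C * (q ^ c) ^ n) ?_ ?_
  · exact (summable_geometric_of_lt_one (pow_pos hq0 c).le
      (pow_lt_one₀ hq0.le hq1 hc.ne')).mul_left C
  · intro n
    have hy : 0 < A * n + B := by positivity
    have ht0 : 0 < qnum Q (A * n + B) := qnum_pos_s2 hQ0 hQ1 hy
    have hlb : qnum Q B ≤ qnum Q (A * n + B) := qnum_le hQ0 hQ1 (by nlinarith [mul_nonneg hA.le (n.cast_nonneg : (0:ℝ) ≤ n)])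
    have hub : qnum Q (A * n + B) ≤ 1 / (1 - Q) := qnum_upper hQ0 hQ1 _
    have hlog : |Real.log (qnum Q (A * n + B))| ≤ M := by
      have h1 : Real.log (qnum Q B) ≤ Real.log (qnum Q (A * n + B)) :=
        Real.log_le_log (qnum_pos_s2 hQ0 hQ1 hB) hlb
      have h2 : Real.log (qnum Q (A * n + B)) ≤ Real.log (1 / (1 - Q)) :=
        Real.log_le_log ht0 hub
      have h3 : Real.log (1 / (1 - Q)) = -Real.log (1 - Q) := by
        rw [one_div, Real.log_inv]
      rw [abs_le]
      constructor
      · have := neg_abs_le (Real.log (qnum Q B)); simp only [hM]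
        have := abs_nonneg (Real.log (1 - Q)); linarith [neg_abs_le (Real.log (qnum Q B))]
      · have := le_abs_self (-Real.log (1 - Q))
        rw [abs_neg] at this
        have := abs_nonneg (Real.log (qnum Q B)); simp only [hM]; linarith [h2, h3 ▸ h2]
    rw [norm_mul, norm_mul]
    have h1 : ‖(-1 : ℂ) ^ n‖ = 1 := by simp
    have h2 : ‖(q : ℂ) ^ (n * c)‖ = (q ^ c) ^ n := by
      rw [norm_pow, Complex.norm_real, Real.norm_eq_abs, abs_of_pos hq0, ← pow_mul, mul_comm]
    have h3 : ‖Complex.exp (-s * (Real.log (qnum Q (A * n + B)) : ℂ))‖ ≤ C := by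
      rw [Complex.norm_exp]
      apply Real.exp_le_exp.mpr
      have hre : (-s * (Real.log (qnum Q (A * n + B)) : ℂ)).re
          = -s.re * Real.log (qnum Q (A * n + B)) := by
        simp [Complex.mul_re]
      rw [hre]
      calc -s.re * Real.log (qnum Q (A * n + B))
          ≤ |(-s.re) * Real.log (qnum Q (A * n + B))| := le_abs_self _
        _ = |s.re| * |Real.log (qnum Q (A * n + B))| := by rw [abs_mul, abs_neg]
        _ ≤ ‖s‖ * M := by
            apply mul_le_mul (Complex.abs_re_le_norm s) hlog (abs_nonneg _) (norm_nonneg s)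
    rw [h1, h2, one_mul]
    calc (q ^ c) ^ n * ‖Complex.exp _‖ ≤ (q ^ c) ^ n * C := by
          apply mul_le_mul_of_nonneg_left h3 (pow_nonneg (pow_nonneg hq0.le c) n)
      _ = C * (q ^ c) ^ n := mul_comm _ _

lemma tsum_range_decomp {g : ℕ → ℂ} (hg : Summable g) {b : ℕ} (hb : 0 < b) :
    ∑' n, g n = ∑ i ∈ Finset.range b, ∑' m, g (m * b + i) := by
  haveI : NeZero b := ⟨hb.ne'⟩
  rw [← (Nat.divModEquiv b).symm.tsum_eq g]
  have hsum : Summable fun p : ℕ × Fin b => g ((Nat.divModEquiv b).symm p) :=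
    (Nat.divModEquiv b).symm.summable_iff.mpr hg
  rw [Summable.tsum_prod' hsum (fun m => hsum.prod_factor m)]
  have step : ∀ m : ℕ, (∑' i : Fin b, g ((Nat.divModEquiv b).symm (m, i)))
      = ∑ i ∈ Finset.range b, g (m * b + i) := by
    intro m
    rw [tsum_fintype]
    rw [Finset.sum_range fun i => g (m * b + i)]
    rfl
  simp_rw [step]
  rw [Summable.tsum_finsetSum]
  intro i hi
  exact hg.comp_injective (fun m n hmn => by
    have := Nat.eq_of_mul_eq_mul_right hb (Nat.add_right_cancel hmn)
    exact this)

theorem stmt2 (q α x : ℝ) (hq0 : 0 < q) (hq1 : q < 1) (hα : 0 < α) (h : ℕ) (hh : 0 < h)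
    (hx : 0 < x) (a b : ℕ) (ha : 0 < a) (hb : 0 < b) (hao : Odd a) (hbo : Odd b) (s : ℂ) :
    ∑ j ∈ Finset.range a, (-1 : ℂ) ^ j * (q : ℂ) ^ (j * b * h) *
        hqZeta (q ^ a) α h ((b : ℝ) * x + (b : ℝ) * (j : ℝ) / (a : ℝ)) s =
      Complex.exp (s * (Real.log (qnum (q ^ α) (a : ℝ)) : ℂ)) * (qnum (q ^ a) 2 : ℂ) *
        ∑ j ∈ Finset.range a, (-1 : ℂ) ^ j * (q : ℂ) ^ (j * b * h) *
          ∑ i ∈ Finset.range b, (-1 : ℂ) ^ i * (q : ℂ) ^ (i * a * h) *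
            ∑' m : ℕ, (-1 : ℂ) ^ m * (q : ℂ) ^ (m * a * b * h) *
              Complex.exp (-s *
                (Real.log (qnum (q ^ α)
                  ((a : ℝ) * (b : ℝ) * ((m : ℝ) + x) + (a : ℝ) * (i : ℝ) + (b : ℝ) * (j : ℝ))) : ℂ)) := by
  set Q : ℝ := q ^ α with hQdef
  have hQ0 : 0 < Q := Real.rpow_pos_of_pos hq0 α
  have hQ1 : Q < 1 := Real.rpow_lt_one hq0.le hq1 hα
  have haR : (0:ℝ) < (a:ℝ) := by exact_mod_cast ha
  have hbR : (0:ℝ) < (b:ℝ) := by exact_mod_cast hb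
  set E : ℂ := Complex.exp (s * (Real.log (qnum Q (a : ℝ)) : ℂ)) with hEdef
  -- base change of rpow
  have hbase : ((q ^ a : ℝ)) ^ α = Q ^ a := by
    rw [← Real.rpow_natCast q a, ← Real.rpow_mul hq0.le, mul_comm,
      Real.rpow_mul hq0.le, Real.rpow_natCast]
  -- per j
  set f : ℕ → ℕ → ℂ := fun j n => (-1 : ℂ) ^ n * (q : ℂ) ^ (n * (a * h)) *
      Complex.exp (-s * (Real.log (qnum Q ((a:ℝ) * n + ((a:ℝ) * b * x + (b:ℝ) * j))) : ℂ))
    with hfdef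
  have hBpos : ∀ j : ℕ, (0:ℝ) < (a:ℝ) * b * x + (b:ℝ) * j := by
    intro j
    have h1 : (0:ℝ) ≤ (b:ℝ) * j := by positivity
    have h2 : (0:ℝ) < (a:ℝ) * b * x := by positivity
    linarith
  have hfsum : ∀ j : ℕ, Summable (f j) := fun j =>
    summable_zterm q hq0 hq1 hQ0 hQ1 (Nat.mul_pos ha hh) haR (hBpos j) s
  have step1 : ∀ j : ℕ,
      hqZeta (q ^ a) α h ((b : ℝ) * x + (b : ℝ) * (j : ℝ) / (a : ℝ)) s =
        (qnum (q ^ a) 2 : ℂ) * (E * ∑' n, f j n) := by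
    intro j
    unfold hqZeta
    congr 1
    have hterm : ∀ n : ℕ,
        zetaTerm (q ^ a) α h ((b : ℝ) * x + (b : ℝ) * (j : ℝ) / (a : ℝ)) s n = E * f j n := by
      intro n
      unfold zetaTerm
      rw [hbase, qnum_pow hQ0 hQ1 a ha]
      have harg : (a:ℝ) * ((n:ℝ) + ((b : ℝ) * x + (b : ℝ) * (j : ℝ) / (a : ℝ)))
          = (a:ℝ) * n + ((a:ℝ) * b * x + (b:ℝ) * j) := by
        field_simp
      rw [harg]
      have hpos1 : 0 < qnum Q ((a:ℝ) * n + ((a:ℝ) * b * x + (b:ℝ) * j)) :=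
        qnum_pos_s2 hQ0 hQ1 (by nlinarith [mul_nonneg haR.le (n.cast_nonneg : (0:ℝ) ≤ n), hBpos j])
      have hpos2 : 0 < qnum Q (a:ℝ) := qnum_pos_s2 hQ0 hQ1 haR
      rw [Real.log_div hpos1.ne' hpos2.ne']
      have hpow : ((q ^ a : ℝ) : ℂ) ^ (n * h) = (q : ℂ) ^ (n * (a * h)) := by
        push_cast
        rw [← pow_mul]
        ring_nf
      rw [hfdef]
      simp only []
      rw [hpow]
      rw [Complex.ofReal_sub]
      have : -s * ((Real.log (qnum Q ((a:ℝ) * n + ((a:ℝ) * b * x + (b:ℝ) * j))) : ℂ)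
            - (Real.log (qnum Q (a:ℝ)) : ℂ))
          = s * (Real.log (qnum Q (a:ℝ)) : ℂ)
            + -s * (Real.log (qnum Q ((a:ℝ) * n + ((a:ℝ) * b * x + (b:ℝ) * j))) : ℂ) := by
        ring
      rw [this, Complex.exp_add, hEdef]
      ring
    rw [tsum_congr hterm, tsum_mul_left]
  have step2 : ∀ j : ℕ, ∑' n, f j n =
      ∑ i ∈ Finset.range b, (-1 : ℂ) ^ i * (q : ℂ) ^ (i * a * h) *
        ∑' m : ℕ, (-1 : ℂ) ^ m * (q : ℂ) ^ (m * a * b * h) *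
          Complex.exp (-s *
            (Real.log (qnum Q
              ((a : ℝ) * (b : ℝ) * ((m : ℝ) + x) + (a : ℝ) * (i : ℝ) + (b : ℝ) * (j : ℝ))) : ℂ)) := by
    intro j
    rw [tsum_range_decomp (hfsum j) hb]
    apply Finset.sum_congr rfl
    intro i hi
    have hterm : ∀ m : ℕ, f j (m * b + i) =
        (-1 : ℂ) ^ i * (q : ℂ) ^ (i * a * h) *
          ((-1 : ℂ) ^ m * (q : ℂ) ^ (m * a * b * h) *
            Complex.exp (-s *
              (Real.log (qnum Q
                ((a : ℝ) * (b : ℝ) * ((m : ℝ) + x) + (a : ℝ) * (i : ℝ) + (b : ℝ) * (j : ℝ))) : ℂ))) := by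
      intro m
      rw [hfdef]
      simp only []
      have h1 : (-1 : ℂ) ^ (m * b + i) = (-1 : ℂ) ^ m * (-1 : ℂ) ^ i := by
        rw [pow_add, pow_mul']
        rw [hbo.neg_one_pow]
      have h2 : (q : ℂ) ^ ((m * b + i) * (a * h)) = (q : ℂ) ^ (m * a * b * h) * (q : ℂ) ^ (i * a * h) := by
        rw [← pow_add]; congr 1; ring
      have h3 : (a:ℝ) * (↑(m * b + i) : ℝ) + ((a:ℝ) * b * x + (b:ℝ) * j)
          = (a : ℝ) * (b : ℝ) * ((m : ℝ) + x) + (a : ℝ) * (i : ℝ) + (b : ℝ) * (j : ℝ) := by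
        push_cast; ring
      rw [h1, h2, h3]
      ring
    rw [tsum_congr hterm, tsum_mul_left]
  -- assemble
  rw [Finset.mul_sum]
  apply Finset.sum_congr rfl
  intro j hj
  rw [step1 j, step2 j]
  ring
end

section
/- (Distribution formula for the weighted (h,q)-zeta function) Let q be a real number with 0 < q < 1, let α > 0 be real, let h be a positive integer, let x > 0 be real, and let a be an odd positive integer. Then for every complex s, ζ̃_q^{(α,h)}(s, ax) = ([2]_q / ([2]_{q^a} · [a]_{q^α}^{s})) · ∑_{i=0}^{a-1} (-1)^i q^{ih} ζ̃_{q^a}^{(α,h)}(s, x + i/a), where [a]_{q^α}^{s} = exp(s · log [a]_{q^α}). -/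
lemma qnum_pos_s4 {q t : ℝ} (h0 : 0 < q) (h1 : q < 1) (ht : 0 < t) : 0 < qnum q t := by
  have h2 : q ^ t < 1 := Real.rpow_lt_one h0.le h1 ht
  have : 0 < 1 - q := by linarith
  exact div_pos (by linarith) this

lemma summable_zetaTerm {q α x : ℝ} (hq0 : 0 < q) (hq1 : q < 1) (hα : 0 < α) {h : ℕ}
    (hh : 0 < h) (hx : 0 < x) (s : ℂ) : Summable (zetaTerm q α h x s) := by
  set Q := q ^ α with hQdef
  have hQ0 : 0 < Q := Real.rpow_pos_of_pos hq0 α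
  have hQ1 : Q < 1 := Real.rpow_lt_one hq0.le hq1 hα
  set lo := qnum Q x with hlo
  have hlopos : 0 < lo := qnum_pos_s4 hQ0 hQ1 hx
  set hi := 1 / (1 - Q) with hhi
  have hQ1' : 0 < 1 - Q := by linarith
  have hhipos : 0 < hi := by positivity
  set M := max |Real.log lo| |Real.log hi| with hM
  set C := Real.exp (|s.re| * M) with hC
  have hbound : ∀ m : ℕ, ‖zetaTerm q α h x s m‖ ≤ C * (q ^ h) ^ m := by
    intro m
    have hmx : (0:ℝ) < (m:ℝ) + x := by positivity
    set t := qnum Q ((m:ℝ) + x) with htdef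
    have htpos : 0 < t := qnum_pos_s4 hQ0 hQ1 hmx
    have hlot : lo ≤ t := by
      rw [hlo, htdef]; unfold qnum
      apply (div_le_div_iff_of_pos_right hQ1').mpr
      have : Q ^ ((m:ℝ) + x) ≤ Q ^ x :=
        Real.rpow_le_rpow_of_exponent_ge hQ0 hQ1.le (by linarith [Nat.cast_nonneg (α := ℝ) m])
      linarith
    have hthi : t ≤ hi := by
      rw [htdef, hhi]; unfold qnum
      apply (div_le_div_iff_of_pos_right hQ1').mpr
      have : 0 < Q ^ ((m:ℝ) + x) := Real.rpow_pos_of_pos hQ0 _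
      linarith
    have hLb : |Real.log t| ≤ M := by
      have h1 : Real.log lo ≤ Real.log t := Real.log_le_log hlopos hlot
      have h2 : Real.log t ≤ Real.log hi := Real.log_le_log htpos hthi
      rw [abs_le]
      constructor
      · have : -M ≤ -|Real.log lo| := neg_le_neg (le_max_left _ _)
        have h3 : -|Real.log lo| ≤ Real.log lo := neg_abs_le _
        linarith
      · have h4 : Real.log hi ≤ |Real.log hi| := le_abs_self _
        have : |Real.log hi| ≤ M := le_max_right _ _
        linarith
    have hexp : Real.exp ((-s * (Real.log t : ℂ)).re) ≤ C := by
      rw [hC]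
      apply Real.exp_le_exp.mpr
      have hre : (-s * (Real.log t : ℂ)).re = -s.re * Real.log t := by
        simp [Complex.mul_re]
      rw [hre]
      calc -s.re * Real.log t ≤ |(-s.re) * Real.log t| := le_abs_self _
        _ = |s.re| * |Real.log t| := by rw [abs_mul, abs_neg]
        _ ≤ |s.re| * M := by gcongr
    have hnorm : ‖zetaTerm q α h x s m‖ = q ^ (m * h) * Real.exp ((-s * (Real.log t : ℂ)).re) := by
      rw [zetaTerm]
      rw [norm_mul, norm_mul, norm_pow, norm_pow, norm_neg, norm_one, one_pow,
        Complex.norm_real, Real.norm_eq_abs, abs_of_pos hq0,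
        Complex.norm_exp, one_mul]
    rw [hnorm]
    have hqpow : q ^ (m * h) = (q ^ h) ^ m := by rw [← pow_mul, mul_comm]
    rw [hqpow, mul_comm C ((q ^ h) ^ m)]
    exact mul_le_mul_of_nonneg_left hexp (by positivity)
  exact Summable.of_norm_bounded
    (((summable_geometric_of_lt_one (pow_nonneg hq0.le h)
      (pow_lt_one₀ hq0.le hq1 hh.ne'))).mul_left C) hbound

lemma qnum_log_split {q α : ℝ} (hq0 : 0 < q) (hq1 : q < 1) (hα : 0 < α) {a : ℕ}
    (ha : 0 < a) {y : ℝ} (hy : 0 < y) :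
    Real.log (qnum (q ^ α) ((a : ℝ) * y)) =
      Real.log (qnum (q ^ α) (a : ℝ)) + Real.log (qnum ((q ^ a) ^ α) y) := by
  set Q := q ^ α with hQdef
  have hQ0 : 0 < Q := Real.rpow_pos_of_pos hq0 α
  have hQ1 : Q < 1 := Real.rpow_lt_one hq0.le hq1 hα
  have hbase : ((q ^ a : ℝ)) ^ α = Q ^ (a : ℝ) := by
    rw [hQdef, ← Real.rpow_natCast q a, ← Real.rpow_mul hq0.le, ← Real.rpow_mul hq0.le,
      mul_comm]
  have hapos : (0:ℝ) < (a : ℝ) := by exact_mod_cast ha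
  have hQa0 : 0 < Q ^ (a : ℝ) := Real.rpow_pos_of_pos hQ0 _
  have hQa1 : Q ^ (a : ℝ) < 1 := Real.rpow_lt_one hQ0.le hQ1 hapos
  have hmul : qnum Q ((a : ℝ) * y) = qnum Q (a : ℝ) * qnum (Q ^ (a : ℝ)) y := by
    unfold qnum
    rw [Real.rpow_mul hQ0.le]
    have h2 : (1 : ℝ) - Q ^ (a : ℝ) ≠ 0 := by linarith
    rw [div_mul_div_comm, mul_comm (1 - Q) (1 - Q ^ (a : ℝ)), mul_div_mul_left _ _ h2]
  rw [hbase, hmul]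
  exact Real.log_mul (qnum_pos_s4 hQ0 hQ1 hapos).ne' (qnum_pos_s4 hQa0 hQa1 hy).ne'

lemma zetaTerm_split {q α x : ℝ} (hq0 : 0 < q) (hq1 : q < 1) (hα : 0 < α) (h : ℕ)
    (hx : 0 < x) {a : ℕ} (ha : 0 < a) (hao : Odd a) (s : ℂ) (n i : ℕ) (hi : i < a) :
    zetaTerm q α h ((a : ℝ) * x) s (n * a + i) =
      ((-1 : ℂ) ^ i * (q : ℂ) ^ (i * h) *
          Complex.exp (-s * (Real.log (qnum (q ^ α) (a : ℝ)) : ℂ))) *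
        zetaTerm (q ^ a) α h (x + (i : ℝ) / (a : ℝ)) s n := by
  have ha' : ((a : ℝ)) ≠ 0 := by positivity
  have hy : (0:ℝ) < (n : ℝ) + (x + (i : ℝ) / (a : ℝ)) := by positivity
  have harg : ((n * a + i : ℕ) : ℝ) + (a : ℝ) * x =
      (a : ℝ) * ((n : ℝ) + (x + (i : ℝ) / (a : ℝ))) := by
    push_cast
    field_simp
    ring
  simp only [zetaTerm]
  rw [harg, qnum_log_split hq0 hq1 hα ha hy]
  have e1 : (-1 : ℂ) ^ (n * a + i) = (-1 : ℂ) ^ n * (-1 : ℂ) ^ i := by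
    rw [pow_add, mul_comm n a, pow_mul, hao.neg_one_pow]
  have e2 : (q : ℂ) ^ ((n * a + i) * h) = ((q : ℂ) ^ a) ^ (n * h) * (q : ℂ) ^ (i * h) := by
    rw [← pow_mul, ← pow_add]
    congr 1
    ring
  have e3 : Complex.exp (-s * ((Real.log (qnum (q ^ α) (a:ℝ)) +
        Real.log (qnum ((q ^ a) ^ α) ((n : ℝ) + (x + (i : ℝ) / (a : ℝ))))  : ℝ) : ℂ)) =
      Complex.exp (-s * (Real.log (qnum (q ^ α) (a:ℝ)) : ℂ)) *
        Complex.exp (-s * (Real.log (qnum ((q ^ a) ^ α) ((n : ℝ) + (x + (i : ℝ) / (a : ℝ)))) : ℂ)) := by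
    rw [← Complex.exp_add]
    congr 1
    push_cast
    ring
  rw [e1, e2, e3, Complex.ofReal_pow]
  ring

set_option maxHeartbeats 1000000

theorem stmt4 (q α x : ℝ) (hq0 : 0 < q) (hq1 : q < 1) (hα : 0 < α) (h : ℕ) (hh : 0 < h)
    (hx : 0 < x) (a : ℕ) (ha : 0 < a) (hao : Odd a) (s : ℂ) :
    hqZeta q α h ((a : ℝ) * x) s =
      ((qnum q 2 : ℂ) /
          ((qnum (q ^ a) 2 : ℂ) * Complex.exp (s * (Real.log (qnum (q ^ α) (a : ℝ)) : ℂ)))) *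
        ∑ i ∈ Finset.range a, (-1 : ℂ) ^ i * (q : ℂ) ^ (i * h) *
          hqZeta (q ^ a) α h (x + (i : ℝ) / (a : ℝ)) s := by
  haveI : NeZero a := ⟨ha.ne'⟩
  have hapos : (0:ℝ) < (a : ℝ) := by exact_mod_cast ha
  have hax : (0:ℝ) < (a : ℝ) * x := by positivity
  set f := zetaTerm q α h ((a : ℝ) * x) s with hfdef
  have hf : Summable f := summable_zetaTerm hq0 hq1 hα hh hax s
  set E : Fin a × ℕ ≃ ℕ := (Equiv.prodComm (Fin a) ℕ).trans (Nat.divModEquiv a).symm with hE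
  have hEval : ∀ p : Fin a × ℕ, E p = p.2 * a + (p.1 : ℕ) := by
    intro p
    simp [hE, Nat.divModEquiv]
  have hf2 : Summable (fun p : Fin a × ℕ => f (E p)) := (E.summable_iff).mpr hf
  have h1 : ∑' m, f m = ∑' (i : Fin a), ∑' (n : ℕ), f (n * a + (i : ℕ)) := by
    rw [← E.tsum_eq f, Summable.tsum_prod' hf2 fun b => (hf2.prod_factor b)]
    exact tsum_congr fun i => tsum_congr fun n => by rw [hEval (i, n)]
  -- constants
  set L : ℝ := Real.log (qnum (q ^ α) (a : ℝ)) with hL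
  have hkey : ∀ (i : ℕ), i < a → ∀ n : ℕ, f (n * a + i) =
      ((-1 : ℂ) ^ i * (q : ℂ) ^ (i * h) * Complex.exp (-s * (L : ℂ))) *
        zetaTerm (q ^ a) α h (x + (i : ℝ) / (a : ℝ)) s n := by
    intro i hi n
    exact zetaTerm_split hq0 hq1 hα h hx ha hao s n i hi
  have h2 : ∑' m, f m = ∑ i ∈ Finset.range a,
      ((-1 : ℂ) ^ i * (q : ℂ) ^ (i * h) * Complex.exp (-s * (L : ℂ))) *
        ∑' (n : ℕ), zetaTerm (q ^ a) α h (x + (i : ℝ) / (a : ℝ)) s n := by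
    rw [h1, tsum_fintype]
    rw [← Fin.sum_univ_eq_sum_range (fun i => ((-1 : ℂ) ^ i * (q : ℂ) ^ (i * h) *
      Complex.exp (-s * (L : ℂ))) *
        ∑' (n : ℕ), zetaTerm (q ^ a) α h (x + (i : ℝ) / (a : ℝ)) s n) a]
    apply Finset.sum_congr rfl
    intro i _
    rw [← tsum_mul_left]
    apply tsum_congr
    intro n
    exact hkey i i.isLt n
  have hq0a : 0 < q ^ a := pow_pos hq0 a
  have hq1a : q ^ a < 1 := pow_lt_one₀ hq0.le hq1 ha.ne'
  have h2pos : (0:ℝ) < qnum (q ^ a) 2 := qnum_pos_s4 hq0a hq1a two_pos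
  have h2ne : ((qnum (q ^ a) 2 : ℝ) : ℂ) ≠ 0 := Complex.ofReal_ne_zero.mpr h2pos.ne'
  have hEexp : Complex.exp (s * (L : ℂ)) ≠ 0 := Complex.exp_ne_zero _
  have hexpinv : Complex.exp (-s * (L : ℂ)) = (Complex.exp (s * (L : ℂ)))⁻¹ := by
    rw [← Complex.exp_neg]
    ring_nf
  rw [hqZeta, h2, Finset.mul_sum, Finset.mul_sum]
  apply Finset.sum_congr rfl
  intro i _
  rw [hqZeta, hexpinv]
  field_simp
end
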